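/- Let A, B, C be F-linear codes of length n over a finite field F such that for all a in A, b in B, c in C the coordinatewise product a*b is orthogonal to c. Then for every c in C, the Hamming weight of c is at least dim(c*A) + dim(c*B), where c*A denotes the linear space {c*a : a in A} (coordinatewise product). -/

import Mathlib

noncomputable section

open Module

/-- Coordinatewise (Hadamard) multiplication by a fixed vector `c`, as a linear map. -/
def hadamard {F : Type*} [CommRing F] {n : ℕ} (c : Fin n → F) :
    (Fin n → F) →ₗ[F] (Fin n → F) where
  toFun a := fun i => c i * a i
  map_add' a b := by funext i; simp [mul_add]
  map_smul' r a := by funext i; simp [smul_eq_mul]; ring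

/-- If a linear map is injective on a submodule, the image has the same finrank. -/
lemma finrank_map_eq_of_injOn {F M N : Type*} [Field F] [AddCommGroup M] [Module F M]
    [AddCommGroup N] [Module F N] [FiniteDimensional F M]
    (f : M →ₗ[F] N) (P : Submodule F M) (hf : ∀ x ∈ P, f x = 0 → x = 0) :
    finrank F (P.map f) = finrank F P := by
  have h1 : LinearMap.range (f.domRestrict P) = P.map f := LinearMap.range_domRestrict _ _
  have h2 : LinearMap.ker (f.domRestrict P) = ⊥ := by
    rw [LinearMap.ker_eq_bot']
    rintro ⟨x, hx⟩ hfx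
    have : f x = 0 := by simpa using hfx
    exact Subtype.ext (hf x hx this)
  have h3 := LinearMap.finrank_range_add_finrank_ker (f.domRestrict P)
  rw [h1, h2, finrank_bot, add_zero] at h3
  exact h3

/-- The dot-product bilinear form on `ι → F`. -/
def dotForm (F : Type*) [CommRing F] (ι : Type*) [Fintype ι] :
    LinearMap.BilinForm F (ι → F) :=
  LinearMap.mk₂ F (fun x y => ∑ i, x i * y i)
    (by intros; simp [add_mul, Finset.sum_add_distrib])
    (by intros; simp [Finset.mul_sum, mul_assoc])
    (by intros; simp [mul_add, Finset.sum_add_distrib])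
    (by intros; simp [Finset.mul_sum, mul_left_comm])

lemma dotForm_apply {F : Type*} [CommRing F] {ι : Type*} [Fintype ι] (x y : ι → F) :
    dotForm F ι x y = ∑ i, x i * y i := rfl

lemma dotForm_isRefl (F : Type*) [CommRing F] (ι : Type*) [Fintype ι] :
    (dotForm F ι).IsRefl := by
  intro x y hxy
  rw [dotForm_apply] at hxy ⊢
  simpa [mul_comm] using hxy

lemma dotForm_nondegenerate (F : Type*) [Field F] (ι : Type*) [Fintype ι] [DecidableEq ι] :
    (dotForm F ι).Nondegenerate := by
  refine (LinearMap.IsRefl.nondegenerate_iff_separatingLeft (dotForm_isRefl F ι)).mpr ?_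
  intro x hx
  funext i
  have := hx (Pi.single i 1)
  rw [dotForm_apply] at this
  simpa [Pi.single_apply, Finset.sum_ite_eq'] using this

theorem ab_bound_linear_codes {F : Type*} [Field F] [Fintype F] [DecidableEq F] {n : ℕ}
    (A B C : Submodule F (Fin n → F))
    (h : ∀ a ∈ A, ∀ b ∈ B, ∀ c ∈ C, ∑ i, a i * b i * c i = 0) :
    ∀ c ∈ C,
      Module.finrank F (A.map (hadamard c)) + Module.finrank F (B.map (hadamard c))
        ≤ hammingNorm c := by
  intro c hc
  set S := {i : Fin n // c i ≠ 0} with hS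
  have hcard : Fintype.card S = hammingNorm c := by
    rw [hammingNorm]
    exact Fintype.card_subtype _
  set π : (Fin n → F) →ₗ[F] (S → F) := LinearMap.funLeft F F (Subtype.val) with hπ
  have hinj : ∀ (P : Submodule F (Fin n → F)),
      ∀ x ∈ P.map (hadamard c), π x = 0 → x = 0 := by
    rintro P x hx hx0
    obtain ⟨a, _, rfl⟩ := hx
    funext i
    by_cases hci : c i = 0
    · simp [hadamard, hci]
    · have := congrFun hx0 ⟨i, hci⟩
      simpa [hπ, LinearMap.funLeft] using this
  have hA : finrank F ((A.map (hadamard c)).map π) = finrank F (A.map (hadamard c)) :=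
    finrank_map_eq_of_injOn π _ (hinj A)
  have hB : finrank F ((B.map (hadamard c)).map π) = finrank F (B.map (hadamard c)) :=
    finrank_map_eq_of_injOn π _ (hinj B)
  set B'' : Submodule F (S → F) := B.map π with hB''
  set e : (S → F) ≃ₗ[F] (S → F) :=
    LinearEquiv.piCongrRight (fun i => LinearEquiv.smulOfNeZero F F (c i.1) i.2) with he
  have hBmap : (B.map (hadamard c)).map π = B''.map (e : (S → F) →ₗ[F] (S → F)) := by
    rw [hB'', ← Submodule.map_comp, ← Submodule.map_comp]
    refine congrFun (congrArg _ (LinearMap.ext fun b => funext fun i => ?_)) B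
    simp [he, hπ, hadamard, LinearMap.funLeft, LinearEquiv.piCongrRight,
      LinearEquiv.smulOfNeZero, LinearEquiv.smulOfUnit, LinearEquiv.smulOfNeZero,
      DistribMulAction.toLinearEquiv, Units.smul_def, smul_eq_mul]
  have hBrank : finrank F ((B.map (hadamard c)).map π) = finrank F B'' := by
    rw [hBmap]
    exact LinearEquiv.finrank_map_eq e B''
  have horth : (A.map (hadamard c)).map π ≤ (dotForm F S).orthogonal B'' := by
    rintro x ⟨y, ⟨a, ha, rfl⟩, rfl⟩
    rw [LinearMap.BilinForm.mem_orthogonal_iff]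
    rintro z ⟨b, hb, rfl⟩
    rw [dotForm_apply]
    have h1 : ∀ i : S, (π b) i * (π (hadamard c a)) i = a i.1 * b i.1 * c i.1 := by
      intro i
      simp [hπ, hadamard, LinearMap.funLeft]
      ring
    rw [Finset.sum_congr rfl (fun i _ => h1 i)]
    rw [← Finset.sum_subtype (Finset.univ.filter (fun i => c i ≠ 0))
      (by simp) (fun i => a i * b i * c i)]
    rw [Finset.sum_subset (Finset.filter_subset _ _)
      (fun i _ hi => by simp only [Finset.mem_filter, Finset.mem_univ, true_and,
        not_not] at hi; simp [hi])]
    exact h a ha b hb c hc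
  have hdim : finrank F ((dotForm F S).orthogonal B'')
      = Fintype.card S - finrank F B'' := by
    rw [LinearMap.BilinForm.finrank_orthogonal (dotForm_nondegenerate F S)
      B'']
    rw [Module.finrank_fintype_fun_eq_card]
  have hle : finrank F ((A.map (hadamard c)).map π)
      ≤ Fintype.card S - finrank F B'' := by
    rw [← hdim]; exact Submodule.finrank_mono horth
  have hBle : finrank F B'' ≤ Fintype.card S := by
    have := Submodule.finrank_le B''
    rwa [Module.finrank_fintype_fun_eq_card] at this
  omega
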